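/- Let μ ∈ (0, 1/4], let p be a prime, let k and ℓ be positive integers with ℓ ≤ (1/8)·√(μ·k), let v ∈ (ℤ/pℤ)^n, and let α ∈ (0,1). If ξ_1, …, ξ_ℓ ∈ ℤ/pℤ satisfy f_{μ,v^k}(ξ_i) > α for each i ∈ [ℓ], then f_{μ,v}(ξ_1 + ⋯ + ξ_ℓ) > α. Equivalently, the ℓ-fold sumset of the level set A_α = {ξ : f_{μ,v^k}(ξ) > α} is contained in B_α = {ξ : f_{μ,v}(ξ) > α}. -/
import Mathlib


/-- The Fourier-side product `f_{μ,v}(ξ) = ∏ᵢ ((1 - μ) + μ cos(2π vᵢ ξ / p))`. -/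
noncomputable def fFun {p : ℕ} [NeZero p] {ι : Type} [Fintype ι]
    (μ : ℝ) (v : ι → ZMod p) (ξ : ZMod p) : ℝ :=
  ∏ i, (1 - μ + μ * Real.cos (2 * Real.pi * ((v i * ξ).val : ℝ) / p))

/-- `|sin (π x.val / p)|` is subadditive as a function of `x : ZMod p`. -/
lemma abs_sin_pi_val_add {p : ℕ} [NeZero p] (x y : ZMod p) :
    |Real.sin (Real.pi * (((x + y).val : ℕ) : ℝ) / p)| ≤
      |Real.sin (Real.pi * ((x.val : ℕ) : ℝ) / p)| +
        |Real.sin (Real.pi * ((y.val : ℕ) : ℝ) / p)| := by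
  have hp : (p : ℝ) ≠ 0 := Nat.cast_ne_zero.mpr (NeZero.ne p)
  set a := Real.pi * ((x.val : ℕ) : ℝ) / p with ha
  set b := Real.pi * ((y.val : ℕ) : ℝ) / p with hb
  set c : ℕ := (x.val + y.val) / p with hc
  have hval : x.val + y.val = (x + y).val + p * c := by
    rw [ZMod.val_add, hc]
    exact (Nat.mod_add_div _ _).symm
  have hab : Real.pi * (((x + y).val : ℕ) : ℝ) / p = a + b + ((-(c : ℤ) : ℤ) : ℝ) * Real.pi := by
    have hcast : ((x.val : ℝ) + (y.val : ℝ)) = (((x + y).val : ℕ) : ℝ) + p * c := by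
      exact_mod_cast congrArg (Nat.cast : ℕ → ℝ) hval
    have h2 : (((x + y).val : ℕ) : ℝ) = (x.val : ℝ) + (y.val : ℝ) - p * c := by linarith
    rw [ha, hb, h2]
    push_cast
    field_simp
    ring
  have h1 : |Real.sin (Real.pi * (((x + y).val : ℕ) : ℝ) / p)| = |Real.sin (a + b)| := by
    rw [hab, Real.sin_add_int_mul_pi, abs_mul, zpow_neg, abs_inv, zpow_natCast, abs_pow]
    simp
  rw [h1, Real.sin_add]
  calc |Real.sin a * Real.cos b + Real.cos a * Real.sin b|
      ≤ |Real.sin a * Real.cos b| + |Real.cos a * Real.sin b| := abs_add_le _ _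
    _ ≤ |Real.sin a| + |Real.sin b| := by
        rw [abs_mul, abs_mul]
        nlinarith [Real.abs_cos_le_one a, Real.abs_cos_le_one b, abs_nonneg (Real.sin a),
          abs_nonneg (Real.sin b), abs_nonneg (Real.cos a), abs_nonneg (Real.cos b)]

/-- `e^{-2t} ≤ 1 - t` for `t ∈ [0, 1/2]`. -/
lemma exp_neg_two_mul_le {t : ℝ} (h0 : 0 ≤ t) (h1 : t ≤ 1 / 2) :
    Real.exp (-(2 * t)) ≤ 1 - t := by
  have h2 : (1 : ℝ) + 2 * t ≤ Real.exp (2 * t) := by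
    have := Real.add_one_le_exp (2 * t); linarith
  have hpos : (0 : ℝ) < 1 + 2 * t := by linarith
  have hepos : (0 : ℝ) < Real.exp (2 * t) := Real.exp_pos _
  rw [Real.exp_neg]
  have : (Real.exp (2 * t))⁻¹ ≤ (1 + 2 * t)⁻¹ := by
    exact inv_anti₀ hpos h2
  refine this.trans ?_
  rw [inv_le_iff_one_le_mul₀ hpos]  -- might not be the right name
  nlinarith

/-- **Claim 4.2.** Let `μ ∈ (0, 1/4]`, `p` prime, `k, ℓ ≥ 1` with `ℓ ≤ (1/8)√(μk)`,
`v ∈ (ℤ/pℤ)ⁿ`, and `α ∈ (0,1)`. If `ξ₁, …, ξ_ℓ ∈ ℤ/pℤ` satisfy `f_{μ,v^k}(ξᵢ) > α` for each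
`i`, then `f_{μ,v}(ξ₁ + ⋯ + ξ_ℓ) > α`; i.e. the `ℓ`-fold sumset of the level set
`A_α = {ξ : f_{μ,v^k}(ξ) > α}` is contained in `B_α = {ξ : f_{μ,v}(ξ) > α}`. Here `v^k`
denotes the concatenation of `k` copies of `v`, so that `f_{μ,v^k} = (f_{μ,v})^k`. -/
theorem sumset_of_level_set
    (μ : ℝ) (hμ : μ ∈ Set.Ioc (0 : ℝ) (1 / 4)) (p : ℕ) [Fact p.Prime]
    (k l : ℕ) (hk : 0 < k) (hl : 0 < l)
    (hlk : (l : ℝ) ≤ (1 / 8) * Real.sqrt (μ * k))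
    (n : ℕ) (v : Fin n → ZMod p) (α : ℝ) (hα : α ∈ Set.Ioo (0 : ℝ) 1)
    (ξ : Fin l → ZMod p)
    (hξ : ∀ i, α < fFun μ (fun x : Fin n × Fin k => v x.1) (ξ i)) :
    α < fFun μ v (∑ i, ξ i) := by
  obtain ⟨hμ0, hμ4⟩ := hμ
  obtain ⟨hα0, hα1⟩ := hα
  set L : ℝ := -Real.log α with hLdef
  have hL0 : 0 < L := by
    have := Real.log_neg hα0 hα1; simp [hLdef]; linarith
  -- the "sine norm"
  set S : Fin n → ZMod p → ℝ := fun i x => |Real.sin (Real.pi * (((v i * x).val : ℕ) : ℝ) / p)|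
    with hSdef
  have hS0 : ∀ i x, 0 ≤ S i x := fun i x => abs_nonneg _
  have hS1 : ∀ i x, S i x ≤ 1 := fun i x => Real.abs_sin_le_one _
  -- each factor of fFun equals 1 - 2 μ (S i x)^2
  have hfact : ∀ x : ZMod p, fFun μ v x = ∏ i, (1 - 2 * μ * (S i x) ^ 2) := by
    intro x
    unfold fFun
    refine Finset.prod_congr rfl fun i _ => ?_
    have h2 : 2 * Real.pi * (((v i * x).val : ℕ) : ℝ) / p
        = 2 * (Real.pi * (((v i * x).val : ℕ) : ℝ) / p) := by ring
    rw [h2, Real.cos_two_mul, hSdef]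
    have := Real.sin_sq_add_cos_sq (Real.pi * (((v i * x).val : ℕ) : ℝ) / p)
    simp only [sq_abs]
    nlinarith [this]
  have hfac_nonneg : ∀ x : ZMod p, ∀ i : Fin n, 0 ≤ 1 - 2 * μ * (S i x) ^ 2 := by
    intro x i
    nlinarith [hS1 i x, hS0 i x]
  -- fFun of concatenated tuple is the k-th power
  have hpow : ∀ x : ZMod p,
      fFun μ (fun y : Fin n × Fin k => v y.1) x = (fFun μ v x) ^ k := by
    intro x
    unfold fFun
    rw [Fintype.prod_prod_type]
    simp [Finset.prod_const, Finset.prod_pow]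
  -- upper bound: product ≤ exp(-2μ ∑ S²)
  have hupper : ∀ x : ZMod p,
      fFun μ v x ≤ Real.exp (-(2 * μ * ∑ i, (S i x) ^ 2)) := by
    intro x
    rw [hfact x]
    have : ∀ i : Fin n, (1 - 2 * μ * (S i x) ^ 2) ≤ Real.exp (-(2 * μ * (S i x) ^ 2)) := by
      intro i
      have := Real.add_one_le_exp (-(2 * μ * (S i x) ^ 2)); linarith
    calc ∏ i, (1 - 2 * μ * (S i x) ^ 2) ≤ ∏ i, Real.exp (-(2 * μ * (S i x) ^ 2)) :=
          Finset.prod_le_prod (fun i _ => hfac_nonneg x i) (fun i _ => this i)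
      _ = Real.exp (∑ i, -(2 * μ * (S i x) ^ 2)) := by rw [Real.exp_sum]
      _ = Real.exp (-(2 * μ * ∑ i, (S i x) ^ 2)) := by
          congr 1
          rw [Finset.mul_sum, ← Finset.sum_neg_distrib]
  have hf_nonneg : ∀ x : ZMod p, 0 ≤ fFun μ v x := by
    intro x; rw [hfact x]; exact Finset.prod_nonneg fun i _ => hfac_nonneg x i
  -- from hypothesis: for each j, ∑ i, (S i (ξ j))² < L / (2 μ k)
  have hμk : (0 : ℝ) < 2 * μ * k := by positivity
  have hTj : ∀ j : Fin l, ∑ i, (S i (ξ j)) ^ 2 < L / (2 * μ * k) := by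
    intro j
    have h1 : α < (fFun μ v (ξ j)) ^ k := by rw [← hpow]; exact hξ j
    have h2 : (fFun μ v (ξ j)) ^ k ≤ Real.exp (-(2 * μ * ∑ i, (S i (ξ j)) ^ 2)) ^ k :=
      pow_le_pow_left₀ (hf_nonneg _) (hupper _) k
    have h3 : α < Real.exp (-(2 * μ * k * ∑ i, (S i (ξ j)) ^ 2)) := by
      rw [← Real.exp_nat_mul] at h2
      have heq : (k : ℝ) * -(2 * μ * ∑ i, (S i (ξ j)) ^ 2)
          = -(2 * μ * ↑k * ∑ i, (S i (ξ j)) ^ 2) := by ring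
      rw [← heq]
      exact lt_of_lt_of_le h1 h2
    have h4 := Real.log_lt_log hα0 h3
    rw [Real.log_exp] at h4
    rw [lt_div_iff₀ hμk]
    linarith
  -- subadditivity of S in its second argument
  have hsub : ∀ i : Fin n, S i (∑ j, ξ j) ≤ ∑ j, S i (ξ j) := by
    intro i
    have hmul : v i * ∑ j, ξ j = ∑ j, v i * ξ j := Finset.mul_sum _ _ _
    have := Finset.le_sum_of_subadditive
      (fun x : ZMod p => |Real.sin (Real.pi * ((x.val : ℕ) : ℝ) / p)|)
      (by simp) (fun x y => abs_sin_pi_val_add x y) Finset.univ (fun j => v i * ξ j)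
    simpa [hSdef, hmul] using this
  -- Cauchy–Schwarz step
  have hl2 : (l : ℝ) ^ 2 ≤ μ * k / 64 := by
    have hμk0 : (0 : ℝ) ≤ μ * k := by positivity
    have h := Real.sq_sqrt hμk0
    have hl0 : (0 : ℝ) ≤ (l : ℝ) := Nat.cast_nonneg l
    nlinarith [hlk, Real.sqrt_nonneg (μ * k)]
  have hsum : ∑ i, (S i (∑ j, ξ j)) ^ 2 ≤ L / 128 := by
    have step1 : ∀ i : Fin n, (S i (∑ j, ξ j)) ^ 2 ≤ (l : ℝ) * ∑ j, (S i (ξ j)) ^ 2 := by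
      intro i
      have h1 : (S i (∑ j, ξ j)) ^ 2 ≤ (∑ j, S i (ξ j)) ^ 2 := by
        have := hsub i
        nlinarith [hS0 i (∑ j, ξ j), Finset.sum_nonneg (fun j (_ : j ∈ Finset.univ) => hS0 i (ξ j))]
      have h2 : (∑ j, S i (ξ j)) ^ 2 ≤ (Finset.univ.card : ℝ) * ∑ j, (S i (ξ j)) ^ 2 :=
        sq_sum_le_card_mul_sum_sq
      simpa [Finset.card_univ] using h1.trans h2
    calc ∑ i, (S i (∑ j, ξ j)) ^ 2
        ≤ ∑ i : Fin n, ((l : ℝ) * ∑ j, (S i (ξ j)) ^ 2) :=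
          Finset.sum_le_sum fun i _ => step1 i
      _ = (l : ℝ) * ∑ j : Fin l, ∑ i, (S i (ξ j)) ^ 2 := by
          rw [← Finset.mul_sum, Finset.sum_comm]
      _ ≤ (l : ℝ) * ((l : ℝ) * (L / (2 * μ * k))) := by
          have : ∑ j : Fin l, ∑ i, (S i (ξ j)) ^ 2 ≤ (l : ℝ) * (L / (2 * μ * k)) := by
            calc ∑ j : Fin l, ∑ i, (S i (ξ j)) ^ 2
                ≤ ∑ _j : Fin l, L / (2 * μ * k) :=
                  Finset.sum_le_sum fun j _ => (hTj j).le
              _ = (l : ℝ) * (L / (2 * μ * k)) := by simp [Finset.sum_const, Finset.card_univ]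
          have hl0 : (0 : ℝ) ≤ (l : ℝ) := Nat.cast_nonneg l
          exact mul_le_mul_of_nonneg_left this hl0
      _ ≤ L / 128 := by
          have hLk : 0 < L / (2 * μ * k) := div_pos hL0 hμk
          have : (l : ℝ) * ((l : ℝ) * (L / (2 * μ * k))) = (l : ℝ) ^ 2 * (L / (2 * μ * k)) := by
            ring
          rw [this]
          have h1 : (l : ℝ) ^ 2 * (L / (2 * μ * k)) ≤ (μ * k / 64) * (L / (2 * μ * k)) :=
            mul_le_mul_of_nonneg_right hl2 hLk.le
          refine h1.trans_eq ?_
          field_simp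
          ring
  -- lower bound
  have hlower : Real.exp (-(4 * μ * ∑ i, (S i (∑ j, ξ j)) ^ 2)) ≤ fFun μ v (∑ j, ξ j) := by
    rw [hfact]
    set σ := ∑ j, ξ j
    calc Real.exp (-(4 * μ * ∑ i, (S i σ) ^ 2))
        = ∏ i, Real.exp (-(4 * μ * (S i σ) ^ 2)) := by
          rw [← Real.exp_sum]
          congr 1
          rw [Finset.mul_sum, ← Finset.sum_neg_distrib]
      _ ≤ ∏ i, (1 - 2 * μ * (S i σ) ^ 2) := by
          refine Finset.prod_le_prod (fun i _ => (Real.exp_pos _).le) fun i _ => ?_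
          have hre : -(4 * μ * (S i σ) ^ 2) = -(2 * (2 * μ * (S i σ) ^ 2)) := by ring
          rw [hre]
          refine exp_neg_two_mul_le ?_ ?_
          · positivity
          · nlinarith [hS1 i σ, hS0 i σ]
  -- combine
  have hexp : Real.exp (-L) = α := by
    rw [hLdef, neg_neg, Real.exp_log hα0]
  have hfinal : Real.exp (-L) < Real.exp (-(4 * μ * ∑ i, (S i (∑ j, ξ j)) ^ 2)) := by
    apply Real.exp_lt_exp.mpr
    have h1 : 4 * μ * ∑ i, (S i (∑ j, ξ j)) ^ 2 ≤ 4 * μ * (L / 128) := by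
      have : (0:ℝ) ≤ 4 * μ := by linarith
      exact mul_le_mul_of_nonneg_left hsum this
    nlinarith
  calc α = Real.exp (-L) := hexp.symm
    _ < Real.exp (-(4 * μ * ∑ i, (S i (∑ j, ξ j)) ^ 2)) := hfinal
    _ ≤ fFun μ v (∑ j, ξ j) := hlower
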